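/- Suppose the norm ‖·‖ on ℝ^k satisfies Assumption 1, 0 < γ₂ ≤ γ₁ ≤ 1, C₁, C₂ > 0; set k₊ := |V| and r := 1/(2 + k₊/γ₁ + (k − k₊)/γ₂). Let (X_i)_{i≥1} be i.i.d. ℝ^k-valued random vectors whose common law has a Lebesgue density p_X continuous at 0 with p_X(0) > 0, and with 0 an interior point of its support. For b > 0 set b_n := b·n^{−r}. Then, for every b > 0, almost surely lim_{n→∞} b_n^{−1} · min_{1≤i≤n} { C₁‖(X_i)_{V+}‖^{γ₁} + C₂‖(X_i)_{V−}‖^{γ₂} } = 0. -/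

import Mathlib

open MeasureTheory Filter Finset

/-- Positive part of a vector relative to coordinate set `V`. -/
def vplus {k : ℕ} (V : Finset (Fin k)) (z : Fin k → ℝ) : Fin k → ℝ :=
  fun j => if j ∈ V then max (z j) 0 else z j

/-- Negative part of a vector relative to coordinate set `V`. -/
def vminus {k : ℕ} (V : Finset (Fin k)) (z : Fin k → ℝ) : Fin k → ℝ :=
  vplus V (-z)

/-- A norm on `ℝ^k` satisfying Assumption 1 (monotone in the magnitude of each coordinate). -/
structure MonNorm (k : ℕ) where
  N : (Fin k → ℝ) → ℝ
  add_le : ∀ x y, N (x + y) ≤ N x + N y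
  smul_eq : ∀ (a : ℝ) (x), N (a • x) = |a| * N x
  eq_zero_iff : ∀ x, N x = 0 ↔ x = 0
  mono : ∀ z w : Fin k → ℝ, (∀ j, |z j| ≤ |w j|) → N z ≤ N w

/-- Hölder continuity with exponent `γ` and constant `C` w.r.t. the norm `N`. -/
def HolderW {k : ℕ} (N : (Fin k → ℝ) → ℝ) (γ C : ℝ) (f : (Fin k → ℝ) → ℝ) : Prop :=
  ∀ x z : Fin k → ℝ, |f x - f z| ≤ C * N (x - z) ^ γ

/-- Coordinatewise monotonicity w.r.t. the coordinates in `V`. -/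
def MonoV {k : ℕ} (V : Finset (Fin k)) (f : (Fin k → ℝ) → ℝ) : Prop :=
  ∀ x z : Fin k → ℝ, (∀ j ∈ V, z j ≤ x j) → (∀ j ∉ V, x j = z j) → f z ≤ f x

/-- The monotone Hölder class `Λ₊,V(γ,C)`. -/
def Lam {k : ℕ} (V : Finset (Fin k)) (N : (Fin k → ℝ) → ℝ) (γ C : ℝ) :
    Set ((Fin k → ℝ) → ℝ) :=
  {f | HolderW N γ C f ∧ MonoV V f}

namespace MonNorm

variable {k : ℕ} (Nm : MonNorm k)

lemma nonneg (x : Fin k → ℝ) : 0 ≤ Nm.N x := by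
  have h0 : Nm.N 0 = 0 := (Nm.eq_zero_iff 0).mpr rfl
  have h1 := Nm.add_le x (-x)
  have h2 : Nm.N (-x) = Nm.N x := by
    have := Nm.smul_eq (-1) x
    simpa using this
  rw [add_neg_cancel, h0, h2] at h1
  linarith

lemma le_const (x : Fin k → ℝ) {M : ℝ} (hM : 0 ≤ M) (h : ∀ j, |x j| ≤ M) :
    Nm.N x ≤ M * Nm.N (fun _ => 1) := by
  have hm := Nm.mono x (M • (fun _ => (1:ℝ))) (by
    intro j
    simpa [abs_of_nonneg hM] using h j)
  rwa [Nm.smul_eq, abs_of_nonneg hM] at hm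

lemma sub_le (x y : Fin k → ℝ) : Nm.N x - Nm.N y ≤ Nm.N (x - y) := by
  have h := Nm.add_le (x - y) y
  rw [sub_add_cancel] at h
  linarith

lemma continuous : Continuous Nm.N := by
  set N1 := Nm.N (fun _ => 1) with hN1
  have hN1nn : 0 ≤ N1 := Nm.nonneg _
  have lip : LipschitzWith (Real.toNNReal N1) Nm.N := by
    apply LipschitzWith.of_dist_le_mul
    intro x y
    rw [Real.dist_eq, abs_sub_le_iff]
    have key : ∀ u v : Fin k → ℝ, Nm.N u - Nm.N v ≤ N1 * dist u v := by
      intro u v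
      refine (Nm.sub_le u v).trans ?_
      have := Nm.le_const (u - v) dist_nonneg (fun j => by
        have := dist_le_pi_dist u v j
        rw [Real.dist_eq] at this
        simpa using this)
      rw [mul_comm] at this
      exact this
    constructor
    · simpa [Real.coe_toNNReal _ hN1nn] using key x y
    · simpa [Real.coe_toNNReal _ hN1nn, dist_comm] using key y x
  exact lip.continuous

end MonNorm

lemma vplus_continuous {k : ℕ} (V : Finset (Fin k)) : Continuous (vplus V) := by
  apply continuous_pi
  intro j
  unfold vplus
  by_cases h : j ∈ V
  · simp only [h, if_true]
    exact (continuous_apply j).max continuous_const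
  · simp only [h, if_false]
    exact continuous_apply j

lemma summable_exp_neg_rpow_aux {c a : ℝ} (hc : 0 < c) (ha : 0 < a) :
    Summable fun n : ℕ => Real.exp (-(c * (n : ℝ) ^ a)) := by
  have h1 : Tendsto (fun x : ℝ => x ^ (2 / a) * Real.exp (-c * x)) atTop (nhds 0) :=
    tendsto_rpow_mul_exp_neg_mul_atTop_nhds_zero _ _ hc
  have h2 : Tendsto (fun n : ℕ => (n : ℝ) ^ a) atTop atTop :=
    (tendsto_rpow_atTop ha).comp tendsto_natCast_atTop_atTop
  have h3 := h1.comp h2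
  apply summable_of_isBigO_nat (Real.summable_one_div_nat_rpow.mpr (by norm_num : (1:ℝ) < 2))
  refine Asymptotics.isBigO_of_div_tendsto_nhds ?_ 0 ?_
  · filter_upwards [eventually_ge_atTop 1] with n hn h0
    exfalso
    have hn' : (0:ℝ) < (n:ℝ) := by exact_mod_cast hn
    have : (0:ℝ) < 1 / (n:ℝ) ^ (2:ℝ) := by positivity
    rw [h0] at this; exact lt_irrefl 0 this
  · apply h3.congr'
    filter_upwards [eventually_ge_atTop 1] with n hn
    have hn0 : (0:ℝ) < (n:ℝ) := by exact_mod_cast hn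
    have hpow : ((n:ℝ) ^ a) ^ (2 / a) = (n:ℝ) ^ (2:ℝ) := by
      rw [← Real.rpow_mul hn0.le]
      congr 1
      field_simp
    simp only [Function.comp, hpow, Pi.div_apply]
    rw [div_div_eq_mul_div, div_one, neg_mul, mul_comm]


lemma dist_bound {k : ℕ} (V : Finset (Fin k)) (Nm : MonNorm k)
    (γ₁ γ₂ C₁ C₂ : ℝ) (hγ₂0 : 0 < γ₂) (hγ : γ₂ ≤ γ₁) (hC₁ : 0 < C₁) (hC₂ : 0 < C₂)
    (p : (Fin k → ℝ) → ℝ) (hpcont : ContinuousAt p 0) (hp0 : 0 < p 0) :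
    ∃ c > 0, ∃ δ₀ > 0, δ₀ ≤ 1 ∧ ∀ δ : ℝ, 0 < δ → δ ≤ δ₀ →
      ENNReal.ofReal (c * δ ^ ((V.card : ℝ)/γ₁ + ((k:ℝ) - V.card)/γ₂)) ≤
        (volume.withDensity fun y => ENNReal.ofReal (p y))
          {x | C₁ * Nm.N (vplus V x) ^ γ₁ + C₂ * Nm.N (vminus V x) ^ γ₂ ≤ δ} := by
  have hγ₁0 : 0 < γ₁ := lt_of_lt_of_le hγ₂0 hγ
  set N1 : ℝ := max (Nm.N (fun _ => 1)) 1 with hN1def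
  have hN1 : 0 < N1 := lt_of_lt_of_le one_pos (le_max_right _ _)
  have hN1' : Nm.N (fun _ => 1) ≤ N1 := le_max_left _ _
  -- continuity ball
  obtain ⟨ρ, hρ, hball⟩ : ∃ ρ > 0, ∀ x : Fin k → ℝ, dist x 0 < ρ → p 0 / 2 ≤ p x := by
    obtain ⟨ρ, hρ, h⟩ := Metric.continuousAt_iff.mp hpcont (p 0 / 2) (half_pos hp0)
    refine ⟨ρ, hρ, fun x hx => ?_⟩
    have := h hx
    rw [Real.dist_eq, abs_lt] at this
    linarith
  -- constants
  set e₁ : ℝ := ((2*C₁) ^ γ₁⁻¹ * N1)⁻¹ with he₁def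
  set e₂ : ℝ := ((2*C₂) ^ γ₂⁻¹ * N1)⁻¹ with he₂def
  have he₁ : 0 < e₁ := by
    apply inv_pos.mpr; apply mul_pos _ hN1
    exact Real.rpow_pos_of_pos (by linarith) _
  have he₂ : 0 < e₂ := by
    apply inv_pos.mpr; apply mul_pos _ hN1
    exact Real.rpow_pos_of_pos (by linarith) _
  set em : ℝ := min e₁ e₂ with hemdef
  have hem : 0 < em := lt_min he₁ he₂
  set kc : ℕ := Vᶜ.card with hkcdef
  refine ⟨(p 0 / 2) * (e₁ ^ V.card * em ^ kc), by positivity,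
    min 1 (2*C₁*(ρ*N1/2) ^ γ₁), lt_min one_pos (by positivity), min_le_left _ _, ?_⟩
  intro δ hδ hδ₀
  have hδ1 : δ ≤ 1 := hδ₀.trans (min_le_left _ _)
  have hδρ : δ ≤ 2*C₁*(ρ*N1/2) ^ γ₁ := hδ₀.trans (min_le_right _ _)
  set t1 : ℝ := (δ/(2*C₁)) ^ γ₁⁻¹ / N1 with ht1def
  set t2 : ℝ := (δ/(2*C₂)) ^ γ₂⁻¹ / N1 with ht2def
  have ht1 : 0 < t1 := by
    apply div_pos _ hN1; exact Real.rpow_pos_of_pos (by positivity) _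
  have ht2 : 0 < t2 := by
    apply div_pos _ hN1; exact Real.rpow_pos_of_pos (by positivity) _
  set t' : ℝ := min t1 t2 with ht'def
  have ht' : 0 < t' := lt_min ht1 ht2
  have ht'1 : t' ≤ t1 := min_le_left _ _
  have ht'2 : t' ≤ t2 := min_le_right _ _
  set box : Set (Fin k → ℝ) :=
    Set.Icc (fun _ => -t') (fun j => if j ∈ V then t1 else t') with hboxdef
  have hbox_meas : MeasurableSet box := measurableSet_Icc
  -- (A) box ⊆ {f ≤ δ}
  have hA : box ⊆ {x | C₁ * Nm.N (vplus V x) ^ γ₁ + C₂ * Nm.N (vminus V x) ^ γ₂ ≤ δ} := by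
    intro x hx
    rw [Set.mem_Icc] at hx
    obtain ⟨hl, hu⟩ := hx
    have hl' : ∀ j, -t' ≤ x j := fun j => hl j
    have hu' : ∀ j, x j ≤ if j ∈ V then t1 else t' := fun j => hu j
    have hplus : ∀ j, |vplus V x j| ≤ t1 := by
      intro j
      unfold vplus
      by_cases hj : j ∈ V
      · rw [if_pos hj, abs_of_nonneg (le_max_right _ _)]
        have := hu' j; rw [if_pos hj] at this
        exact max_le this ht1.le
      · rw [if_neg hj]
        have := hu' j; rw [if_neg hj] at this
        exact (abs_le.mpr ⟨hl' j, this⟩).trans ht'1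
    have hminus : ∀ j, |vminus V x j| ≤ t2 := by
      intro j
      unfold vminus vplus
      by_cases hj : j ∈ V
      · rw [if_pos hj, abs_of_nonneg (le_max_right _ _)]
        refine (max_le ?_ ht'.le).trans ht'2
        have := hl' j; simp only [Pi.neg_apply]; linarith
      · rw [if_neg hj]
        have := hu' j; rw [if_neg hj] at this
        simp only [Pi.neg_apply, abs_neg]
        exact (abs_le.mpr ⟨hl' j, this⟩).trans ht'2
    have hNp : Nm.N (vplus V x) ≤ (δ/(2*C₁)) ^ γ₁⁻¹ := by
      refine (Nm.le_const _ ht1.le hplus).trans ?_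
      calc t1 * Nm.N (fun _ => 1) ≤ t1 * N1 :=
            mul_le_mul_of_nonneg_left hN1' ht1.le
        _ = (δ/(2*C₁)) ^ γ₁⁻¹ := by
            rw [ht1def]; field_simp
    have hNm : Nm.N (vminus V x) ≤ (δ/(2*C₂)) ^ γ₂⁻¹ := by
      refine (Nm.le_const _ ht2.le hminus).trans ?_
      calc t2 * Nm.N (fun _ => 1) ≤ t2 * N1 :=
            mul_le_mul_of_nonneg_left hN1' ht2.le
        _ = (δ/(2*C₂)) ^ γ₂⁻¹ := by
            rw [ht2def]; field_simp
    have h1 : C₁ * Nm.N (vplus V x) ^ γ₁ ≤ δ / 2 := by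
      have := Real.rpow_le_rpow (Nm.nonneg _) hNp hγ₁0.le
      rw [Real.rpow_inv_rpow (by positivity) hγ₁0.ne'] at this
      calc C₁ * Nm.N (vplus V x) ^ γ₁ ≤ C₁ * (δ/(2*C₁)) :=
            mul_le_mul_of_nonneg_left this hC₁.le
        _ = δ / 2 := by field_simp
    have h2 : C₂ * Nm.N (vminus V x) ^ γ₂ ≤ δ / 2 := by
      have := Real.rpow_le_rpow (Nm.nonneg _) hNm hγ₂0.le
      rw [Real.rpow_inv_rpow (by positivity) hγ₂0.ne'] at this
      calc C₂ * Nm.N (vminus V x) ^ γ₂ ≤ C₂ * (δ/(2*C₂)) :=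
            mul_le_mul_of_nonneg_left this hC₂.le
        _ = δ / 2 := by field_simp
    simp only [Set.mem_setOf_eq]
    linarith
  -- (B) p ≥ p0/2 on box
  have ht1ρ : t1 ≤ ρ / 2 := by
    have h1 : δ/(2*C₁) ≤ (ρ*N1/2) ^ γ₁ := by
      rw [div_le_iff₀ (by linarith)]
      linarith [hδρ]
    have h2 : (δ/(2*C₁)) ^ γ₁⁻¹ ≤ ρ*N1/2 := by
      have := Real.rpow_le_rpow (by positivity) h1 (inv_nonneg.mpr hγ₁0.le)
      rwa [Real.rpow_rpow_inv (by positivity) hγ₁0.ne'] at this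
    rw [ht1def, div_le_iff₀ hN1]
    calc (δ/(2*C₁)) ^ γ₁⁻¹ ≤ ρ*N1/2 := h2
      _ = ρ/2*N1 := by ring
  have hB : ∀ x ∈ box, p 0 / 2 ≤ p x := by
    intro x hx
    rw [Set.mem_Icc] at hx
    obtain ⟨hl, hu⟩ := hx
    apply hball
    have : dist x 0 ≤ ρ/2 := by
      rw [dist_pi_le_iff (by linarith)]
      intro j
      rw [Real.dist_eq]
      simp only [Pi.zero_apply, sub_zero]
      have huj : x j ≤ t1 := by
        have h : x j ≤ if j ∈ V then t1 else t' := hu j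
        by_cases hj : j ∈ V
        · rwa [if_pos hj] at h
        · rw [if_neg hj] at h; exact h.trans ht'1
      have hlj : -t1 ≤ x j := le_trans (by simp only [neg_le_neg_iff]; exact ht'1) (hl j)
      exact (abs_le.mpr ⟨hlj, huj⟩).trans ht1ρ
    linarith
  -- (C) measure bound
  have hvol : ENNReal.ofReal (t1 ^ V.card * t' ^ kc) ≤ volume box := by
    rw [hboxdef, Real.volume_Icc_pi]
    have hstep : ∀ j : Fin k, ENNReal.ofReal (if j ∈ V then t1 else t') ≤
        ENNReal.ofReal ((if j ∈ V then t1 else t') - (-t')) := by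
      intro j
      apply ENNReal.ofReal_le_ofReal
      have : (0:ℝ) ≤ t' := ht'.le
      linarith
    calc ENNReal.ofReal (t1 ^ V.card * t' ^ kc)
        = ∏ j : Fin k, ENNReal.ofReal (if j ∈ V then t1 else t') := by
          rw [← ENNReal.ofReal_prod_of_nonneg (fun j _ => by positivity)]
          congr 1
          rw [← Finset.prod_mul_prod_compl V]
          rw [Finset.prod_congr rfl (fun j hj => if_pos hj),
            Finset.prod_congr rfl (fun j hj => if_neg (Finset.mem_compl.mp hj)),
            Finset.prod_const, Finset.prod_const]
      _ ≤ ∏ j : Fin k, ENNReal.ofReal ((if j ∈ V then t1 else t') - (-t')) :=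
          Finset.prod_le_prod' (fun j _ => hstep j)
  -- algebraic lower bound for t1 ^ card * t' ^ kc
  have ht1eq : t1 = δ ^ γ₁⁻¹ * e₁ := by
    rw [ht1def, he₁def, Real.div_rpow hδ.le (by linarith : (0:ℝ) ≤ 2*C₁)]
    field_simp
  have ht2eq : t2 = δ ^ γ₂⁻¹ * e₂ := by
    rw [ht2def, he₂def, Real.div_rpow hδ.le (by linarith : (0:ℝ) ≤ 2*C₂)]
    field_simp
  have hmono : δ ^ γ₂⁻¹ ≤ δ ^ γ₁⁻¹ :=
    Real.rpow_le_rpow_of_exponent_ge hδ hδ1 (by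
      apply inv_anti₀ hγ₂0 hγ)
  have hδγ₂ : 0 < δ ^ γ₂⁻¹ := Real.rpow_pos_of_pos hδ _
  have ht'low : δ ^ γ₂⁻¹ * em ≤ t' := by
    apply le_min
    · rw [ht1eq]
      exact mul_le_mul hmono (min_le_left _ _) hem.le (Real.rpow_pos_of_pos hδ _).le
    · rw [ht2eq]
      exact mul_le_mul_of_nonneg_left (min_le_right _ _) hδγ₂.le
  have hcast : ((k:ℝ) - V.card) = (kc:ℝ) := by
    rw [hkcdef, Finset.card_compl, Fintype.card_fin,
      Nat.cast_sub (by simpa using Finset.card_le_univ V)]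
  have hsplit : δ ^ ((V.card : ℝ)/γ₁ + ((k:ℝ) - V.card)/γ₂)
      = (δ ^ γ₁⁻¹) ^ V.card * (δ ^ γ₂⁻¹) ^ kc := by
    rw [hcast]
    rw [Real.rpow_add hδ, ← Real.rpow_natCast (δ ^ γ₁⁻¹), ← Real.rpow_natCast (δ ^ γ₂⁻¹),
      ← Real.rpow_mul hδ.le, ← Real.rpow_mul hδ.le]
    congr 2 <;> field_simp <;> ring
  have hprod : δ ^ ((V.card : ℝ)/γ₁ + ((k:ℝ) - V.card)/γ₂) * (e₁ ^ V.card * em ^ kc)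
      ≤ t1 ^ V.card * t' ^ kc := by
    have heq : δ ^ ((V.card : ℝ)/γ₁ + ((k:ℝ) - V.card)/γ₂) * (e₁ ^ V.card * em ^ kc)
        = (δ ^ γ₁⁻¹ * e₁) ^ V.card * (δ ^ γ₂⁻¹ * em) ^ kc := by
      rw [hsplit, mul_pow, mul_pow]; ring
    rw [heq, ← ht1eq]
    apply mul_le_mul _ (pow_le_pow_left₀ (by positivity) ht'low kc) (by positivity) (by positivity)
    exact le_refl _
  -- put everything together
  have hmain : ENNReal.ofReal (p 0 / 2) * ENNReal.ofReal (t1 ^ V.card * t' ^ kc) ≤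
      (volume.withDensity fun y => ENNReal.ofReal (p y))
        {x | C₁ * Nm.N (vplus V x) ^ γ₁ + C₂ * Nm.N (vminus V x) ^ γ₂ ≤ δ} := by
    have h1 : (volume.withDensity fun y => ENNReal.ofReal (p y)) box ≤
        (volume.withDensity fun y => ENNReal.ofReal (p y))
          {x | C₁ * Nm.N (vplus V x) ^ γ₁ + C₂ * Nm.N (vminus V x) ^ γ₂ ≤ δ} :=
      measure_mono hA
    refine le_trans ?_ h1
    rw [withDensity_apply _ hbox_meas]
    have h2 : ∫⁻ x in box, ENNReal.ofReal (p 0 / 2) ∂volume ≤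
        ∫⁻ x in box, ENNReal.ofReal (p x) ∂volume := by
      apply lintegral_mono_ae
      rw [ae_restrict_iff' hbox_meas]
      exact ae_of_all _ fun x hx => ENNReal.ofReal_le_ofReal (hB x hx)
    refine le_trans ?_ h2
    rw [setLIntegral_const]
    exact mul_le_mul_right hvol _
  calc ENNReal.ofReal ((p 0 / 2) * (e₁ ^ V.card * em ^ kc) *
        δ ^ ((V.card : ℝ)/γ₁ + ((k:ℝ) - V.card)/γ₂))
      = ENNReal.ofReal (p 0 / 2) * ENNReal.ofReal
          (δ ^ ((V.card : ℝ)/γ₁ + ((k:ℝ) - V.card)/γ₂) * (e₁ ^ V.card * em ^ kc)) := by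
        rw [← ENNReal.ofReal_mul (by positivity)]
        ring_nf
    _ ≤ ENNReal.ofReal (p 0 / 2) * ENNReal.ofReal (t1 ^ V.card * t' ^ kc) :=
        mul_le_mul_right (ENNReal.ofReal_le_ofReal hprod) _
    _ ≤ _ := hmain

/-- `b_n⁻¹ · min_{1≤i≤n} { C₁‖(X_i)_{V+}‖^{γ₁} + C₂‖(X_i)_{V−}‖^{γ₂} } → 0`
almost surely, where `b_n = b n^{−r}` and `r = 1/(2 + k₊/γ₁ + (k−k₊)/γ₂)`. -/
theorem stmt_13 {k : ℕ} (V : Finset (Fin k)) (Nm : MonNorm k)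
    (γ₁ γ₂ C₁ C₂ : ℝ)
    (hγ₂0 : 0 < γ₂) (hγ : γ₂ ≤ γ₁) (hγ₁1 : γ₁ ≤ 1)
    (hC₁ : 0 < C₁) (hC₂ : 0 < C₂)
    (Ω : Type*) [MeasurableSpace Ω] (P : Measure Ω) [IsProbabilityMeasure P]
    (X : ℕ → Ω → (Fin k → ℝ)) (hXmeas : ∀ i, Measurable (X i))
    (hiid : ProbabilityTheory.iIndepFun X P)
    (p : (Fin k → ℝ) → ℝ)
    (hlaw : ∀ i, Measure.map (X i) P = volume.withDensity (fun y => ENNReal.ofReal (p y)))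
    (hpcont : ContinuousAt p 0) (hp0 : 0 < p 0)
    (hsupp : (0 : Fin k → ℝ) ∈ interior (Function.support p)) :
    ∀ b : ℝ, 0 < b →
      ∀ᵐ ω ∂P,
        Tendsto (fun n : ℕ =>
            (b * (n : ℝ) ^ (-(1 / (2 + (V.card : ℝ) / γ₁ + ((k : ℝ) - V.card) / γ₂))))⁻¹ *
              sInf {v : ℝ | ∃ i < n,
                v = C₁ * Nm.N (vplus V (X i ω)) ^ γ₁ + C₂ * Nm.N (vminus V (X i ω)) ^ γ₂})
          atTop (nhds 0) := by
  intro b hb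
  have hγ₁0 : 0 < γ₁ := lt_of_lt_of_le hγ₂0 hγ
  have hkV : (V.card : ℝ) ≤ (k : ℝ) := by
    exact_mod_cast (by simpa using Finset.card_le_univ V : V.card ≤ k)
  set s : ℝ := (V.card : ℝ) / γ₁ + ((k : ℝ) - V.card) / γ₂ with hsdef
  have hs0 : 0 ≤ s :=
    add_nonneg (div_nonneg (Nat.cast_nonneg _) hγ₁0.le)
      (div_nonneg (by linarith) hγ₂0.le)
  have h2s : (0:ℝ) < 2 + s := by linarith
  set r : ℝ := 1 / (2 + s) with hrdef
  have hr0 : 0 < r := by rw [hrdef]; positivity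
  have hrs1 : r * s < 1 := by
    rw [hrdef, one_div_mul_eq_div]
    exact (div_lt_one h2s).mpr (by linarith)
  have hrs0 : 0 ≤ r * s := mul_nonneg hr0.le hs0
  set a : ℝ := 1 - r * s with hadef
  have ha : 0 < a := by rw [hadef]; linarith
  have ha1 : a ≤ 1 := by rw [hadef]; linarith
  set f : (Fin k → ℝ) → ℝ :=
    fun x => C₁ * Nm.N (vplus V x) ^ γ₁ + C₂ * Nm.N (vminus V x) ^ γ₂ with hfdef
  have hf_cont : Continuous f := by
    rw [hfdef]
    have h1 : Continuous fun x => Nm.N (vplus V x) :=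
      Nm.continuous.comp (vplus_continuous V)
    have h2 : Continuous fun x => Nm.N (vminus V x) := by
      have : Continuous fun x : Fin k → ℝ => Nm.N (vplus V (-x)) :=
        (Nm.continuous.comp (vplus_continuous V)).comp continuous_neg
      exact this
    exact (continuous_const.mul (h1.rpow_const fun x => Or.inr hγ₁0.le)).add
      (continuous_const.mul (h2.rpow_const fun x => Or.inr hγ₂0.le))
  have hf_meas : Measurable f := hf_cont.measurable
  have hf_nonneg : ∀ x, 0 ≤ f x := fun x =>
    add_nonneg (mul_nonneg hC₁.le (Real.rpow_nonneg (Nm.nonneg _) _))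
      (mul_nonneg hC₂.le (Real.rpow_nonneg (Nm.nonneg _) _))
  set ν : Measure (Fin k → ℝ) := volume.withDensity fun y => ENNReal.ofReal (p y) with hνdef
  have hν_prob : IsProbabilityMeasure ν := by
    have := Measure.isProbabilityMeasure_map (μ := P) (hXmeas 0).aemeasurable
    rwa [hlaw 0] at this
  obtain ⟨c, hc, δ₀, hδ₀pos, hδ₀1, hq⟩ :=
    dist_bound V Nm γ₁ γ₂ C₁ C₂ hγ₂0 hγ hC₁ hC₂ p hpcont hp0
  -- key per-epsilon statement
  have key : ∀ ε : ℝ, 0 < ε → ∀ᵐ ω ∂P, ∀ᶠ n in atTop,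
      ∃ i < n, f (X i ω) ≤ ε * (b * (n:ℝ) ^ (-r)) := by
    intro ε hε
    set c₃ : ℝ := c * min (δ₀ ^ s) ((ε * b) ^ s) with hc₃def
    have hδ₀s : 0 < δ₀ ^ s := Real.rpow_pos_of_pos hδ₀pos _
    have hεbs : 0 < (ε * b) ^ s := Real.rpow_pos_of_pos (by positivity) _
    have hc₃ : 0 < c₃ := mul_pos hc (lt_min hδ₀s hεbs)
    set δn : ℕ → ℝ := fun n => min δ₀ (ε * (b * (n:ℝ) ^ (-r))) with hδndef
    set A : ℕ → Set Ω := fun n => {ω | ∀ i < n, δn n < f (X i ω)} with hAdef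
    have hμA : ∀ n : ℕ, 1 ≤ n →
        P (A n) ≤ ENNReal.ofReal (Real.exp (-(c₃ * (n:ℝ) ^ a))) := by
      intro n hn
      have hn0 : (0:ℝ) < n := by exact_mod_cast hn
      have hn1 : (1:ℝ) ≤ n := by exact_mod_cast hn
      have hnr : (0:ℝ) < (n:ℝ) ^ (-r) := Real.rpow_pos_of_pos hn0 _
      have hbn : 0 < ε * (b * (n:ℝ) ^ (-r)) := by positivity
      have hδn_pos : 0 < δn n := lt_min hδ₀pos hbn
      have hδn_le : δn n ≤ δ₀ := min_le_left _ _
      have hδns0 : 0 < δn n ^ s := Real.rpow_pos_of_pos hδn_pos _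
      have hset : MeasurableSet {x : Fin k → ℝ | f x ≤ δn n} :=
        measurableSet_le hf_meas measurable_const
      have hIoi_meas : MeasurableSet (f ⁻¹' Set.Ioi (δn n)) := hf_meas measurableSet_Ioi
      have hAeq : A n = ⋂ i ∈ Finset.range n, X i ⁻¹' (f ⁻¹' Set.Ioi (δn n)) := by
        ext ω
        simp [hAdef, Set.mem_iInter, Finset.mem_range, Set.mem_preimage, Set.mem_Ioi]
      have hprod := hiid.measure_inter_preimage_eq_mul (Finset.range n)
        (sets := fun _ => f ⁻¹' Set.Ioi (δn n)) (fun i _ => hIoi_meas)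
      have hmap : ∀ i : ℕ, P (X i ⁻¹' (f ⁻¹' Set.Ioi (δn n))) = ν (f ⁻¹' Set.Ioi (δn n)) := by
        intro i
        rw [← Measure.map_apply (hXmeas i) hIoi_meas, hlaw i]
      have hPA : P (A n) = ν (f ⁻¹' Set.Ioi (δn n)) ^ n := by
        rw [hAeq, hprod, Finset.prod_congr rfl (fun i _ => hmap i), Finset.prod_const,
          Finset.card_range]
      have hcompl : ν (f ⁻¹' Set.Ioi (δn n)) = 1 - ν {x | f x ≤ δn n} := by
        have hceq : f ⁻¹' Set.Ioi (δn n) = {x | f x ≤ δn n}ᶜ := by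
          ext x; simp [Set.mem_Ioi, not_le]
        rw [hceq, prob_compl_eq_one_sub hset]
      have hqn := hq (δn n) hδn_pos hδn_le
      have hbase : ν (f ⁻¹' Set.Ioi (δn n)) ≤ ENNReal.ofReal (Real.exp (-(c * δn n ^ s))) := by
        rw [hcompl]
        rcases le_or_gt (c * δn n ^ s) 1 with hle | hlt
        · calc 1 - ν {x | f x ≤ δn n} ≤ 1 - ENNReal.ofReal (c * δn n ^ s) :=
                tsub_le_tsub_left hqn 1
            _ = ENNReal.ofReal (1 - c * δn n ^ s) := by
                rw [← ENNReal.ofReal_one, ← ENNReal.ofReal_sub _ (by positivity)]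
            _ ≤ ENNReal.ofReal (Real.exp (-(c * δn n ^ s))) := by
                apply ENNReal.ofReal_le_ofReal
                linarith [Real.add_one_le_exp (-(c * δn n ^ s))]
        · have h1 : (1:ENNReal) ≤ ν {x | f x ≤ δn n} :=
            le_trans (ENNReal.one_le_ofReal.mpr hlt.le) hqn
          rw [tsub_eq_zero_of_le h1]
          exact zero_le
      -- exponent comparison
      have hna : (n:ℝ) ^ a ≤ (n:ℝ) := by
        calc (n:ℝ) ^ a ≤ (n:ℝ) ^ (1:ℝ) :=
              Real.rpow_le_rpow_of_exponent_le hn1 ha1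
          _ = (n:ℝ) := Real.rpow_one _
      have hnrs1 : (n:ℝ) ^ (-(r*s)) ≤ 1 :=
        Real.rpow_le_one_of_one_le_of_nonpos hn1 (by linarith)
      have hδns : min (δ₀ ^ s) ((ε*b) ^ s) * (n:ℝ) ^ (-(r*s)) ≤ δn n ^ s := by
        rcases min_cases δ₀ (ε * (b * (n:ℝ) ^ (-r))) with ⟨heq, _⟩ | ⟨heq, hle⟩
        · have : δn n ^ s = δ₀ ^ s := by rw [hδndef]; simp only []; rw [heq]
          rw [this]
          calc min (δ₀ ^ s) ((ε*b) ^ s) * (n:ℝ) ^ (-(r*s))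
              ≤ δ₀ ^ s * 1 := mul_le_mul (min_le_left _ _) hnrs1
                (Real.rpow_nonneg hn0.le _) hδ₀s.le
            _ = δ₀ ^ s := mul_one _
        · have heq2 : δn n ^ s = (ε*b) ^ s * (n:ℝ) ^ (-(r*s)) := by
            rw [hδndef]; simp only []; rw [heq]
            rw [show ε * (b * (n:ℝ) ^ (-r)) = (ε * b) * (n:ℝ) ^ (-r) by ring]
            rw [Real.mul_rpow (by positivity) hnr.le, ← Real.rpow_mul hn0.le, neg_mul]
          rw [heq2]
          exact mul_le_mul_of_nonneg_right (min_le_right _ _) (Real.rpow_nonneg hn0.le _)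
      have hexp : c₃ * (n:ℝ) ^ a ≤ (n:ℝ) * (c * δn n ^ s) := by
        have hsplit : (n:ℝ) ^ a = (n:ℝ) * (n:ℝ) ^ (-(r*s)) := by
          rw [hadef, sub_eq_add_neg, Real.rpow_add hn0, Real.rpow_one]
        rw [hc₃def, hsplit]
        calc c * min (δ₀ ^ s) ((ε*b) ^ s) * ((n:ℝ) * (n:ℝ) ^ (-(r*s)))
            = (n:ℝ) * (c * (min (δ₀ ^ s) ((ε*b) ^ s) * (n:ℝ) ^ (-(r*s)))) := by ring
          _ ≤ (n:ℝ) * (c * (δn n ^ s)) :=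
              mul_le_mul_of_nonneg_left (mul_le_mul_of_nonneg_left hδns hc.le) hn0.le
      calc P (A n) = ν (f ⁻¹' Set.Ioi (δn n)) ^ n := hPA
        _ ≤ ENNReal.ofReal (Real.exp (-(c * δn n ^ s))) ^ n := pow_le_pow_left' hbase n
        _ = ENNReal.ofReal (Real.exp (-(c * δn n ^ s)) ^ n) := by
            rw [ENNReal.ofReal_pow (Real.exp_nonneg _)]
        _ = ENNReal.ofReal (Real.exp ((n:ℝ) * (-(c * δn n ^ s)))) := by
            rw [Real.exp_nat_mul]
        _ ≤ ENNReal.ofReal (Real.exp (-(c₃ * (n:ℝ) ^ a))) := by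
            apply ENNReal.ofReal_le_ofReal
            apply Real.exp_le_exp.mpr
            nlinarith [hexp]
    have hμA' : ∀ n : ℕ,
        P (A n) ≤ ENNReal.ofReal (Real.exp c₃ * Real.exp (-(c₃ * (n:ℝ) ^ a))) := by
      intro n
      rcases Nat.eq_zero_or_pos n with rfl | hn
      · have h0 : ((0:ℕ):ℝ) ^ a = 0 := by
          rw [Nat.cast_zero, Real.zero_rpow ha.ne']
        calc P (A 0) ≤ 1 := prob_le_one
          _ ≤ ENNReal.ofReal (Real.exp c₃ * Real.exp (-(c₃ * ((0:ℕ):ℝ) ^ a))) := by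
              rw [h0]
              simp only [mul_zero, neg_zero, Real.exp_zero, mul_one]
              rw [show (1:ENNReal) = ENNReal.ofReal 1 by simp]
              exact ENNReal.ofReal_le_ofReal (Real.one_le_exp hc₃.le)
      · calc P (A n) ≤ ENNReal.ofReal (Real.exp (-(c₃ * (n:ℝ) ^ a))) := hμA n hn
          _ ≤ ENNReal.ofReal (Real.exp c₃ * Real.exp (-(c₃ * (n:ℝ) ^ a))) := by
              apply ENNReal.ofReal_le_ofReal
              exact le_mul_of_one_le_left (Real.exp_nonneg _) (Real.one_le_exp hc₃.le)
    have hsum : (∑' n, P (A n)) ≠ ⊤ := by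
      have hsummable : Summable (fun n : ℕ => Real.exp c₃ * Real.exp (-(c₃ * (n:ℝ) ^ a))) :=
        (summable_exp_neg_rpow_aux hc₃ ha).mul_left _
      have h1 : (∑' n, P (A n)) ≤
          ∑' n : ℕ, ENNReal.ofReal (Real.exp c₃ * Real.exp (-(c₃ * (n:ℝ) ^ a))) :=
        ENNReal.tsum_le_tsum hμA'
      have h2 : (∑' n : ℕ, ENNReal.ofReal (Real.exp c₃ * Real.exp (-(c₃ * (n:ℝ) ^ a))))
          = ENNReal.ofReal (∑' n : ℕ, Real.exp c₃ * Real.exp (-(c₃ * (n:ℝ) ^ a))) :=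
        (ENNReal.ofReal_tsum_of_nonneg (fun n => by positivity) hsummable).symm
      exact (lt_of_le_of_lt (h1.trans_eq h2) ENNReal.ofReal_lt_top).ne
    have hBC := MeasureTheory.ae_eventually_notMem hsum
    filter_upwards [hBC] with ω hω
    filter_upwards [hω] with n hn
    simp only [hAdef, Set.mem_setOf_eq, not_forall, not_lt, exists_prop] at hn
    obtain ⟨i, hi, hile⟩ := hn
    exact ⟨i, hi, hile.trans (min_le_right _ _)⟩
  -- assemble
  have key2 : ∀ᵐ ω ∂P, ∀ m : ℕ, ∀ᶠ n in atTop,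
      ∃ i < n, f (X i ω) ≤ (1/((m:ℝ)+1)) * (b * (n:ℝ) ^ (-r)) :=
    ae_all_iff.mpr fun m => key (1/((m:ℝ)+1)) (by positivity)
  filter_upwards [key2] with ω hω
  have hexp_eq : -(1 / (2 + (V.card : ℝ)/γ₁ + ((k:ℝ) - V.card)/γ₂)) = -r := by
    rw [hrdef, hsdef]; ring_nf
  simp only [hexp_eq]
  rw [Metric.tendsto_atTop]
  intro ε hε
  obtain ⟨m, hm⟩ := exists_nat_one_div_lt hε
  obtain ⟨N, hN⟩ := eventually_atTop.mp (hω m)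
  refine ⟨max N 1, fun n hn => ?_⟩
  have hn1 : 1 ≤ n := le_trans (le_max_right _ _) hn
  have hnN : N ≤ n := le_trans (le_max_left _ _) hn
  obtain ⟨i, hi, hile⟩ := hN n hnN
  have hn0 : (0:ℝ) < n := by exact_mod_cast hn1
  have hbn : 0 < b * (n:ℝ) ^ (-r) := mul_pos hb (Real.rpow_pos_of_pos hn0 _)
  set S : Set ℝ := {v : ℝ | ∃ i < n,
    v = C₁ * Nm.N (vplus V (X i ω)) ^ γ₁ + C₂ * Nm.N (vminus V (X i ω)) ^ γ₂} with hSdef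
  have hmem : f (X i ω) ∈ S := ⟨i, hi, rfl⟩
  have hS_nonneg : ∀ v ∈ S, (0:ℝ) ≤ v := by
    rintro v ⟨j, hj, rfl⟩
    exact hf_nonneg (X j ω)
  have hbdd : BddBelow S := ⟨0, fun v hv => hS_nonneg v hv⟩
  have hinf_le : sInf S ≤ f (X i ω) := csInf_le hbdd hmem
  have hinf_nonneg : (0:ℝ) ≤ sInf S := le_csInf ⟨_, hmem⟩ hS_nonneg
  rw [Real.dist_eq, sub_zero, abs_of_nonneg (by positivity)]
  calc (b * (n:ℝ) ^ (-r))⁻¹ * sInf S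
      ≤ (b * (n:ℝ) ^ (-r))⁻¹ * ((1/((m:ℝ)+1)) * (b * (n:ℝ) ^ (-r))) := by
        apply mul_le_mul_of_nonneg_left (hinf_le.trans hile) (by positivity)
    _ = 1/((m:ℝ)+1) := by field_simp
    _ < ε := hm
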